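/- arXiv:2403.04941 — 2 statements merged into one kernel-verified Lean document; each statement's English description precedes it below -/
import Mathlib

section
/- Fix n ≥ 1 and let G be a subgroup of the Houghton group H_n that contains every finitely supported element of H_n. If for every nonzero group homomorphism χ : H_n → ℝ there exists g ∈ G with χ(g) ≠ 0 (i.e. G is not contained in the kernel of any nonzero real character of H_n), then G has finite index in H_n. -/
/-- A permutation `σ` of `Fin n × ℕ` is an *eventual translation* if there are integers
`m₁, …, m_n` and a finite set `F ⊆ Fin n × ℕ` such that `σ (i, k) = (i, k + mᵢ)` for all
`(i, k) ∉ F`. -/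
def IsEventualTranslation {n : ℕ} (σ : Equiv.Perm (Fin n × ℕ)) : Prop :=
  ∃ (m : Fin n → ℤ) (F : Finset (Fin n × ℕ)),
    ∀ p : Fin n × ℕ, p ∉ F →
      (σ p).1 = p.1 ∧ ((σ p).2 : ℤ) = (p.2 : ℤ) + m p.1

/-- The Houghton group `H_n`: the subgroup of `Equiv.Perm (Fin n × ℕ)` consisting of the
eventual translations. -/
def HoughtonGroup (n : ℕ) : Subgroup (Equiv.Perm (Fin n × ℕ)) where
  carrier := {σ | IsEventualTranslation σ}
  one_mem' := ⟨0, ∅, fun p _ => by simp⟩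
  mul_mem' := by
    rintro a b ⟨m, F, hF⟩ ⟨m', F', hF'⟩
    refine ⟨m + m', F' ∪ F.preimage b b.injective.injOn, fun p hp => ?_⟩
    simp only [Finset.mem_union, Finset.mem_preimage, not_or] at hp
    obtain ⟨hp1, hp2⟩ := hp
    obtain ⟨hb1, hb2⟩ := hF' p hp1
    obtain ⟨ha1, ha2⟩ := hF (b p) hp2
    refine ⟨by simp [Equiv.Perm.mul_apply, ha1, hb1], ?_⟩
    simp only [Equiv.Perm.mul_apply, Pi.add_apply]
    rw [ha2, hb2, hb1]
    ring
  inv_mem' := by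
    rintro a ⟨m, F, hF⟩
    refine ⟨-m, F.image a, fun p hp => ?_⟩
    have hmem : a⁻¹ p ∉ F := by
      intro h
      exact hp (Finset.mem_image.mpr ⟨a⁻¹ p, h, a.apply_symm_apply p⟩)
    obtain ⟨h1, h2⟩ := hF (a⁻¹ p) hmem
    rw [show a (a⁻¹ p) = p from a.apply_symm_apply p] at h1 h2
    refine ⟨h1.symm, ?_⟩
    rw [← h1] at h2
    simp only [Pi.neg_apply]
    omega

namespace HoughtonAux

variable {n : ℕ}

lemma translation (σ : HoughtonGroup n) : IsEventualTranslation (σ : Equiv.Perm (Fin n × ℕ)) := σ.2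

noncomputable def nu (σ : HoughtonGroup n) : Fin n → ℤ := (translation σ).choose

lemma nu_spec (σ : HoughtonGroup n) : ∃ F : Finset (Fin n × ℕ),
    ∀ p : Fin n × ℕ, p ∉ F →
      ((σ : Equiv.Perm (Fin n × ℕ)) p).1 = p.1 ∧
        (((σ : Equiv.Perm (Fin n × ℕ)) p).2 : ℤ) = (p.2 : ℤ) + nu σ p.1 :=
  (translation σ).choose_spec

lemma exists_nat_not_mem (i : Fin n) (F : Finset (Fin n × ℕ)) : ∃ k : ℕ, (i, k) ∉ F := by
  by_contra h
  push_neg at h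
  have hinj : Function.Injective (fun k : ℕ => ((i, k) : Fin n × ℕ)) := by
    intro a b hab
    exact congrArg Prod.snd hab
  have : (Set.range fun k : ℕ => ((i, k) : Fin n × ℕ)).Infinite :=
    Set.infinite_range_of_injective hinj
  exact this (F.finite_toSet.subset (by rintro _ ⟨k, rfl⟩; exact h k))

lemma nu_eq (σ : HoughtonGroup n) (m : Fin n → ℤ) (F : Finset (Fin n × ℕ))
    (h : ∀ p : Fin n × ℕ, p ∉ F →
      ((σ : Equiv.Perm (Fin n × ℕ)) p).1 = p.1 ∧
        (((σ : Equiv.Perm (Fin n × ℕ)) p).2 : ℤ) = (p.2 : ℤ) + m p.1) :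
    nu σ = m := by
  obtain ⟨F₀, h₀⟩ := nu_spec σ
  funext i
  obtain ⟨k, hk⟩ := exists_nat_not_mem i (F ∪ F₀)
  simp only [Finset.mem_union, not_or] at hk
  have h1 : (((σ : Equiv.Perm (Fin n × ℕ)) (i, k)).2 : ℤ) = (k : ℤ) + m i := (h (i, k) hk.1).2
  have h2 : (((σ : Equiv.Perm (Fin n × ℕ)) (i, k)).2 : ℤ) = (k : ℤ) + nu σ i := (h₀ (i, k) hk.2).2
  omega

lemma nu_one : nu (1 : HoughtonGroup n) = 0 :=
  nu_eq 1 0 ∅ (fun p _ => by simp)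

lemma nu_mul (σ τ : HoughtonGroup n) : nu (σ * τ) = nu σ + nu τ := by
  obtain ⟨F, hF⟩ := nu_spec σ
  obtain ⟨F', hF'⟩ := nu_spec τ
  refine nu_eq _ _ (F' ∪ F.preimage (τ : Equiv.Perm (Fin n × ℕ))
    (τ : Equiv.Perm (Fin n × ℕ)).injective.injOn) (fun p hp => ?_)
  simp only [Finset.mem_union, Finset.mem_preimage, not_or] at hp
  obtain ⟨hp1, hp2⟩ := hp
  obtain ⟨hb1, hb2⟩ := hF' p hp1
  obtain ⟨ha1, ha2⟩ := hF ((τ : Equiv.Perm (Fin n × ℕ)) p) hp2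
  have hco : ((σ * τ : HoughtonGroup n) : Equiv.Perm (Fin n × ℕ)) p
      = (σ : Equiv.Perm (Fin n × ℕ)) ((τ : Equiv.Perm (Fin n × ℕ)) p) := rfl
  rw [hco]
  refine ⟨by rw [ha1, hb1], ?_⟩
  simp only [Pi.add_apply]
  rw [ha2, hb2, hb1]
  ring

lemma nu_inv (σ : HoughtonGroup n) : nu σ⁻¹ = -nu σ := by
  have := nu_mul σ⁻¹ σ
  rw [inv_mul_cancel, nu_one] at this
  exact eq_neg_of_add_eq_zero_left this.symm

lemma nu_support (σ : HoughtonGroup n) (h : nu σ = 0) :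
    {x : Fin n × ℕ | (σ : Equiv.Perm (Fin n × ℕ)) x ≠ x}.Finite := by
  obtain ⟨F, hF⟩ := nu_spec σ
  refine F.finite_toSet.subset (fun p hp => ?_)
  by_contra hpf
  apply hp
  obtain ⟨h1, h2⟩ := hF p hpf
  rw [h] at h2
  simp only [Pi.zero_apply, add_zero, Nat.cast_inj] at h2
  exact Prod.ext h1 h2

lemma mem_toIntSubmodule {M : Type*} [AddCommGroup M] (S : AddSubgroup M) (x : M) :
    x ∈ AddSubgroup.toIntSubmodule S ↔ x ∈ S := by
  rw [← SetLike.mem_coe, AddSubgroup.coe_toIntSubmodule, SetLike.mem_coe]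

end HoughtonAux


open HoughtonAux in
/-- If a subgroup `G` of the Houghton group `H_n` (`n ≥ 1`) contains every finitely
supported element and is not contained in the kernel of any nonzero real character of
`H_n`, then `G` has finite index in `H_n`. -/
theorem houghton_subgroup_finite_index (n : ℕ) (hn : 1 ≤ n)
    (G : Subgroup (HoughtonGroup n))
    (hfin : ∀ σ : HoughtonGroup n,
      {x : Fin n × ℕ | (σ : Equiv.Perm (Fin n × ℕ)) x ≠ x}.Finite → σ ∈ G)
    (hchar : ∀ χ : HoughtonGroup n → ℝ,
      (∀ σ τ : HoughtonGroup n, χ (σ * τ) = χ σ + χ τ) →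
      (∃ σ : HoughtonGroup n, χ σ ≠ 0) →
      ∃ g ∈ G, χ g ≠ 0) :
    G.index ≠ 0 := by
  intro hidx
  classical
  let L : AddSubgroup (Fin n → ℤ) :=
    { carrier := nu '' (G : Set (HoughtonGroup n))
      zero_mem' := ⟨1, G.one_mem, nu_one⟩
      add_mem' := by
        rintro _ _ ⟨g, hg, rfl⟩ ⟨h, hh, rfl⟩
        exact ⟨g * h, G.mul_mem hg hh, nu_mul g h⟩
      neg_mem' := by
        rintro _ ⟨g, hg, rfl⟩
        exact ⟨g⁻¹, G.inv_mem hg, nu_inv g⟩ }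
  let L' : Submodule ℤ (Fin n → ℤ) := AddSubgroup.toIntSubmodule L
  let K : AddSubgroup (Fin n → ℤ) :=
    { carrier := Set.range (nu (n := n))
      zero_mem' := ⟨1, nu_one⟩
      add_mem' := by rintro _ _ ⟨g, rfl⟩ ⟨h, rfl⟩; exact ⟨g * h, nu_mul g h⟩
      neg_mem' := by rintro _ ⟨g, rfl⟩; exact ⟨g⁻¹, nu_inv g⟩ }
  let K' : Submodule ℤ (Fin n → ℤ) := AddSubgroup.toIntSubmodule K
  let T : Submodule ℤ ((Fin n → ℤ) ⧸ L') := K'.map L'.mkQ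
  have hmemT : ∀ σ : HoughtonGroup n, L'.mkQ (nu σ) ∈ T := fun σ =>
    Submodule.mem_map_of_mem ((mem_toIntSubmodule K _).mpr ⟨σ, rfl⟩)
  let f0 : HoughtonGroup n → ↥T := fun σ => ⟨L'.mkQ (nu σ), hmemT σ⟩
  have hker : ∀ σ : HoughtonGroup n, nu σ ∈ L → σ ∈ G := by
    rintro σ ⟨g, hg, hgeq⟩
    have h0 : nu (σ * g⁻¹) = 0 := by
      rw [nu_mul, nu_inv, hgeq, add_neg_cancel]
    have hmem := hfin _ (nu_support _ h0)
    have : σ * g⁻¹ * g ∈ G := G.mul_mem hmem hg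
    simpa using this
  have hwd : ∀ σ τ : HoughtonGroup n, σ⁻¹ * τ ∈ G → f0 σ = f0 τ := by
    intro σ τ h
    apply Subtype.ext
    show L'.mkQ _ = L'.mkQ _
    rw [Submodule.mkQ_apply, Submodule.mkQ_apply, Submodule.Quotient.eq]
    refine (mem_toIntSubmodule L _).mpr ?_
    have h1 : nu (σ⁻¹ * τ) ∈ L := ⟨_, h, rfl⟩
    have h2 := L.neg_mem h1
    have heq : -(nu (σ⁻¹ * τ)) = nu σ - nu τ := by
      rw [nu_mul, nu_inv]; abel
    rwa [heq] at h2
  let Φ : (HoughtonGroup n ⧸ G) → ↥T :=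
    Quotient.lift f0 (fun a b hab => hwd a b (QuotientGroup.leftRel_apply.mp hab))
  have hinj : Function.Injective Φ := by
    intro x y
    refine Quotient.inductionOn₂ x y (fun σ τ h => ?_)
    have h' : L'.mkQ (nu σ) = L'.mkQ (nu τ) := congrArg Subtype.val h
    rw [Submodule.mkQ_apply, Submodule.mkQ_apply, Submodule.Quotient.eq] at h'
    obtain ⟨g, hg, hgeq⟩ := (mem_toIntSubmodule L _).mp h'
    have hmem : nu (σ⁻¹ * τ) ∈ L := by
      refine ⟨g⁻¹, G.inv_mem hg, ?_⟩
      rw [nu_mul, nu_inv, nu_inv, hgeq]; abel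
    exact Quotient.sound (QuotientGroup.leftRel_apply.mpr (hker _ hmem))
  have hinfQ : Infinite (HoughtonGroup n ⧸ G) := by
    rw [Subgroup.index] at hidx
    rcases Nat.card_eq_zero.mp hidx with h | h
    · exact (h.false ((1 : HoughtonGroup n) : HoughtonGroup n ⧸ G)).elim
    · exact h
  have hinfT : Infinite ↥T := Infinite.of_injective Φ hinj
  haveI : Module.Finite ℤ ↥T := Module.Finite.iff_fg.mpr (IsNoetherian.noetherian T)
  haveI : AddGroup.FG ↥T := Module.Finite.iff_addGroup_fg.mp ‹_›
  obtain ⟨m, ι, fι, p, hp, e, ⟨eqv⟩⟩ := AddCommGroup.equiv_free_prod_directSum_zmod ↥T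
  rcases Nat.eq_zero_or_pos m with hm | hm
  · subst hm
    haveI : ∀ i, NeZero (p i ^ e i) := fun i => ⟨pow_ne_zero _ (hp i).pos.ne'⟩
    haveI : Unique (Fin 0 →₀ ℤ) :=
      ⟨⟨0⟩, fun a => by ext i; exact i.elim0⟩
    haveI : Finite ((Fin 0 →₀ ℤ) × (DirectSum ι fun i => ZMod (p i ^ e i))) := by
      haveI : Fintype (DirectSum ι fun i => ZMod (p i ^ e i)) := DFinsupp.fintype
      infer_instance
    haveI : Finite ↥T := Finite.of_equiv _ eqv.symm.toEquiv
    exact not_finite ↥T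
  · let i0 : Fin m := ⟨0, hm⟩
    let φ : ↥T →+ ℝ := (Int.castAddHom ℝ).comp
      (((Finsupp.applyAddHom i0).comp (AddMonoidHom.fst _ _)).comp eqv.toAddMonoidHom)
    let χ : HoughtonGroup n → ℝ := fun σ => φ (f0 σ)
    have hadd : ∀ σ τ : HoughtonGroup n, χ (σ * τ) = χ σ + χ τ := by
      intro σ τ
      have hf : f0 (σ * τ) = f0 σ + f0 τ := by
        apply Subtype.ext
        show L'.mkQ _ = L'.mkQ _ + L'.mkQ _
        rw [nu_mul, map_add]
      show φ (f0 (σ * τ)) = φ (f0 σ) + φ (f0 τ)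
      rw [hf, map_add]
    have hex : ∃ σ : HoughtonGroup n, χ σ ≠ 0 := by
      by_contra hall
      push_neg at hall
      have hT0 : ∀ t : ↥T, φ t = 0 := by
        rintro ⟨t, ht⟩
        obtain ⟨z, hz, rfl⟩ := Submodule.mem_map.mp ht
        obtain ⟨σ, rfl⟩ := (mem_toIntSubmodule K _).mp hz
        exact hall σ
      have h1 := hT0 (eqv.symm (Finsupp.single i0 1, 0))
      simp only [φ, AddMonoidHom.comp_apply, AddEquiv.coe_toAddMonoidHom,
        AddEquiv.apply_symm_apply, AddMonoidHom.coe_fst, Finsupp.applyAddHom_apply,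
        Finsupp.single_eq_same, Int.coe_castAddHom, Int.cast_one] at h1
      exact one_ne_zero h1
    obtain ⟨g, hg, hchig⟩ := hchar χ hadd hex
    apply hchig
    have hf0 : f0 g = 0 := by
      apply Subtype.ext
      show L'.mkQ (nu g) = 0
      rw [Submodule.mkQ_apply, Submodule.Quotient.mk_eq_zero]
      exact (mem_toIntSubmodule L _).mpr ⟨g, hg, rfl⟩
    show φ (f0 g) = 0
    rw [hf0, map_zero]
end

section
/- Fix n ≥ 1 and let S be any finite subset of Fin n × ℕ. The pointwise stabilizer of S in the Houghton group H_n, namely the subgroup {σ ∈ H_n : σ(x) = x for all x ∈ S}, is isomorphic as a group to H_n itself. -/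
/-- The pointwise stabilizer of a finite set `S` in the Houghton group: the subgroup of
elements of `H_n` fixing every point of `S`. -/
def houghtonPointwiseStabilizer (n : ℕ) (S : Finset (Fin n × ℕ)) :
    Subgroup (HoughtonGroup n) where
  carrier := {σ | ∀ x ∈ S, (σ : Equiv.Perm (Fin n × ℕ)) x = x}
  one_mem' := fun x _ => rfl
  mul_mem' := by
    intro a b ha hb
    simp only [Set.mem_setOf_eq] at *
    intro x hx
    simp [Equiv.Perm.mul_apply, ha x hx, hb x hx]
  inv_mem' := by
    intro a ha
    simp only [Set.mem_setOf_eq] at *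
    intro x hx
    simp only [Subgroup.coe_inv]
    exact (Equiv.symm_apply_eq _).mpr (ha x hx).symm


section NatAux

variable (p : ℕ → Prop) [DecidablePred p]

theorem count_eventual {B : ℕ} (hB : ∀ j, B ≤ j → p j) :
    ∀ j, B ≤ j → Nat.count p j = Nat.count p B + (j - B) := by
  intro j hj
  induction j, hj using Nat.le_induction with
  | base => simp
  | succ j hj ih =>
    rw [Nat.count_succ, ih, if_pos (hB j hj)]
    omega

theorem nth_eventual {B : ℕ} (hB : ∀ j, B ≤ j → p j) :
    ∀ k, B ≤ k → Nat.nth p k = k + (B - Nat.count p B) := by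
  intro k hk
  have hcB : Nat.count p B ≤ B := Nat.count_le p
  have hpj : p (B + (k - Nat.count p B)) := hB _ (by omega)
  have hcj : Nat.count p (B + (k - Nat.count p B)) = k := by
    rw [count_eventual p hB _ (by omega)]; omega
  have h := Nat.nth_count hpj
  rw [hcj] at h
  rw [h]; omega

end NatAux

namespace HoughtonAux

variable {n : ℕ} (S : Finset (Fin n × ℕ))

def pr (i : Fin n) : ℕ → Prop := fun k => (i, k) ∉ S

instance (i : Fin n) : DecidablePred (pr S i) := fun k =>
  inferInstanceAs (Decidable ((i, k) ∉ S))

theorem pr_of_ge (i : Fin n) {j : ℕ} (hj : 1 + S.sup (·.2) ≤ j) : pr S i j := by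
  intro h
  have h2 : (i, j).2 ≤ S.sup (·.2) := Finset.le_sup h
  simp only at h2
  omega

theorem pr_infinite (i : Fin n) : (setOf (pr S i)).Infinite :=
  Set.infinite_of_injective_forall_mem (f := fun k : ℕ => 1 + S.sup (·.2) + k)
    (add_right_injective _) (fun k => pr_of_ge S i (Nat.le_add_right _ k))

noncomputable def toC (q : Fin n × ℕ) : Fin n × ℕ := (q.1, Nat.nth (pr S q.1) q.2)

noncomputable def fromC (q : Fin n × ℕ) : Fin n × ℕ := (q.1, Nat.count (pr S q.1) q.2)

theorem fromC_toC (q : Fin n × ℕ) : fromC S (toC S q) = q := by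
  simp [toC, fromC, Nat.count_nth_of_infinite (pr_infinite S q.1)]
  exact Prod.ext rfl (Nat.count_nth_of_infinite (pr_infinite S q.1) q.2)

theorem toC_not_mem (q : Fin n × ℕ) : toC S q ∉ S :=
  Nat.nth_mem_of_infinite (pr_infinite S q.1) q.2

theorem toC_fromC {q : Fin n × ℕ} (hq : q ∉ S) : toC S (fromC S q) = q := by
  have hpq : pr S q.1 q.2 := hq
  simp [toC, fromC, Nat.nth_count hpq]

theorem not_mem_of_fix {σ : Equiv.Perm (Fin n × ℕ)} (hσ : ∀ x ∈ S, σ x = x)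
    {q : Fin n × ℕ} (hq : q ∉ S) : σ q ∉ S := by
  intro h
  exact hq ((σ.injective (hσ _ h)) ▸ h)

noncomputable def conj (σ : Equiv.Perm (Fin n × ℕ)) (hσ : ∀ x ∈ S, σ x = x) :
    Equiv.Perm (Fin n × ℕ) where
  toFun q := fromC S (σ (toC S q))
  invFun q := fromC S (σ⁻¹ (toC S q))
  left_inv q := by
    show fromC S (σ⁻¹ (toC S (fromC S (σ (toC S q))))) = q
    rw [toC_fromC S (not_mem_of_fix S hσ (toC_not_mem S q))]
    simp [fromC_toC]
  right_inv q := by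
    have hinv : ∀ x ∈ S, σ⁻¹ x = x := fun x hx => by
      conv_lhs => rw [← hσ x hx]
      simp
    show fromC S (σ (toC S (fromC S (σ⁻¹ (toC S q))))) = q
    rw [toC_fromC S (not_mem_of_fix S hinv (toC_not_mem S q))]
    simp [fromC_toC]

theorem conj_mem (σ : Equiv.Perm (Fin n × ℕ)) (hσ : ∀ x ∈ S, σ x = x)
    (hσH : IsEventualTranslation σ) : IsEventualTranslation (conj S σ hσ) := by
  obtain ⟨m, F, hF⟩ := hσH
  set B : ℕ := 1 + S.sup (·.2) + (1 + F.sup (·.2)) with hBdef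
  have hprB : ∀ (i : Fin n) (j : ℕ), B ≤ j → pr S i j := fun i j hj =>
    pr_of_ge S i (by omega)
  have hFB : ∀ (i : Fin n) (j : ℕ), B ≤ j → (i, j) ∉ F := by
    intro i j hj h
    have h2 : (i, j).2 ≤ F.sup (·.2) := Finset.le_sup h
    simp only at h2
    omega
  set M : ℕ := Finset.univ.sup (fun i : Fin n => (m i).natAbs) with hMdef
  refine ⟨m, Finset.univ ×ˢ Finset.range (B + M), ?_⟩
  rintro ⟨i, k⟩ hp
  have hk : B + M ≤ k := by
    by_contra h
    refine hp ?_
    simp only [Finset.mem_product, Finset.mem_range]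
    exact ⟨Finset.mem_univ i, by omega⟩
  have hmi : (m i).natAbs ≤ M := Finset.le_sup (f := fun i : Fin n => (m i).natAbs) (Finset.mem_univ i)
  have hcB : Nat.count (pr S i) B ≤ B := Nat.count_le _
  set c : ℕ := B - Nat.count (pr S i) B with hcdef
  have hnth : Nat.nth (pr S i) k = k + c :=
    nth_eventual _ (hprB i) k (by omega)
  obtain ⟨h1, h2⟩ := hF (i, k + c) (hFB i (k + c) (by omega))
  simp only at h1 h2
  have hq2B : B ≤ (σ (i, k + c)).2 := by omega
  have hcnt : Nat.count (pr S i) ((σ (i, k + c)).2)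
      = Nat.count (pr S i) B + ((σ (i, k + c)).2 - B) :=
    count_eventual _ (hprB i) _ hq2B
  have happ : conj S σ hσ (i, k) = fromC S (σ (toC S (i, k))) := rfl
  have htoC : toC S (i, k) = (i, k + c) := by
    simp [toC, hnth]
  rw [happ, htoC]
  constructor
  · simp [fromC, h1]
  · simp only [fromC, h1]
    omega


theorem conj_apply (σ : Equiv.Perm (Fin n × ℕ)) (hσ : ∀ x ∈ S, σ x = x) (q : Fin n × ℕ) :
    conj S σ hσ q = fromC S (σ (toC S q)) := rfl

noncomputable def extFun (τ : Equiv.Perm (Fin n × ℕ)) (q : Fin n × ℕ) : Fin n × ℕ :=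
  if q ∈ S then q else toC S (τ (fromC S q))

theorem extFun_inv (τ : Equiv.Perm (Fin n × ℕ)) (q : Fin n × ℕ) :
    extFun S τ⁻¹ (extFun S τ q) = q := by
  by_cases hq : q ∈ S
  · simp [extFun, hq]
  · simp only [extFun]
    simp only [if_neg hq]
    rw [if_neg (toC_not_mem S _), fromC_toC,
      ← Equiv.Perm.mul_apply, inv_mul_cancel, Equiv.Perm.one_apply, toC_fromC S hq]

noncomputable def extPerm (τ : Equiv.Perm (Fin n × ℕ)) : Equiv.Perm (Fin n × ℕ) where
  toFun := extFun S τ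
  invFun := extFun S τ⁻¹
  left_inv := extFun_inv S τ
  right_inv q := by
    have h := extFun_inv S τ⁻¹ q
    rwa [inv_inv] at h

theorem extPerm_apply (τ : Equiv.Perm (Fin n × ℕ)) (q : Fin n × ℕ) :
    extPerm S τ q = if q ∈ S then q else toC S (τ (fromC S q)) := rfl

theorem extPerm_fix (τ : Equiv.Perm (Fin n × ℕ)) : ∀ x ∈ S, extPerm S τ x = x :=
  fun x hx => by rw [extPerm_apply, if_pos hx]

theorem extPerm_mem (τ : Equiv.Perm (Fin n × ℕ)) (hτ : IsEventualTranslation τ) :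
    IsEventualTranslation (extPerm S τ) := by
  obtain ⟨m, F, hF⟩ := hτ
  set B : ℕ := 1 + S.sup (·.2) + (1 + F.sup (·.2)) with hBdef
  have hprB : ∀ (i : Fin n) (j : ℕ), B ≤ j → pr S i j := fun i j hj =>
    pr_of_ge S i (by omega)
  have hFB : ∀ (i : Fin n) (j : ℕ), B ≤ j → (i, j) ∉ F := by
    intro i j hj h
    have h2 : (i, j).2 ≤ F.sup (·.2) := Finset.le_sup h
    simp only at h2
    omega
  set M : ℕ := Finset.univ.sup (fun i : Fin n => (m i).natAbs) with hMdef
  refine ⟨m, Finset.univ ×ˢ Finset.range (B + B + M), ?_⟩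
  rintro ⟨i, k⟩ hp
  have hk : B + B + M ≤ k := by
    by_contra h
    refine hp ?_
    simp only [Finset.mem_product, Finset.mem_range]
    exact ⟨Finset.mem_univ i, by omega⟩
  have hmi : (m i).natAbs ≤ M :=
    Finset.le_sup (f := fun i : Fin n => (m i).natAbs) (Finset.mem_univ i)
  have hcB : Nat.count (pr S i) B ≤ B := Nat.count_le _
  set c : ℕ := B - Nat.count (pr S i) B with hcdef
  have hnotS : (i, k) ∉ S := hprB i k (by omega)
  have hcnt : Nat.count (pr S i) k = Nat.count (pr S i) B + (k - B) :=
    count_eventual _ (hprB i) k (by omega)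
  set t : ℕ := Nat.count (pr S i) k with htdef
  have htB : B ≤ t := by omega
  obtain ⟨h1, h2⟩ := hF (i, t) (hFB i t htB)
  simp only at h1 h2
  have hj : B ≤ (τ (i, t)).2 := by omega
  have hnth : Nat.nth (pr S i) ((τ (i, t)).2) = (τ (i, t)).2 + c :=
    nth_eventual _ (hprB i) _ hj
  have happ : extPerm S τ (i, k) = toC S (τ (fromC S (i, k))) := by
    rw [extPerm_apply, if_neg hnotS]
  have hfrom : fromC S (i, k) = (i, t) := rfl
  rw [happ, hfrom]
  constructor
  · simp [toC, h1]
  · simp only [toC, h1]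
    rw [hnth]
    omega

theorem conj_extPerm (τ : Equiv.Perm (Fin n × ℕ)) (q : Fin n × ℕ) :
    conj S (extPerm S τ) (extPerm_fix S τ) q = τ q := by
  rw [conj_apply, extPerm_apply, if_neg (toC_not_mem S q), fromC_toC, fromC_toC]

end HoughtonAux

open HoughtonAux in
noncomputable def stabHom (n : ℕ) (S : Finset (Fin n × ℕ)) :
    houghtonPointwiseStabilizer n S →* HoughtonGroup n where
  toFun σ := ⟨conj S σ.1.1 σ.2, conj_mem S σ.1.1 σ.2 σ.1.2⟩
  map_one' := by
    apply Subtype.ext; apply Equiv.ext; intro q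
    show fromC S ((1 : Equiv.Perm (Fin n × ℕ)) (toC S q)) = q
    simpa using fromC_toC S q
  map_mul' σ τ := by
    apply Subtype.ext; apply Equiv.ext; intro q
    show fromC S ((σ.1.1 * τ.1.1) (toC S q)) =
      fromC S (σ.1.1 (toC S (fromC S (τ.1.1 (toC S q)))))
    rw [toC_fromC S (not_mem_of_fix S τ.2 (toC_not_mem S q))]
    rfl


/-- For any finite subset `S` of `Fin n × ℕ`, the pointwise stabilizer of `S` in the
Houghton group `H_n` (`n ≥ 1`) is isomorphic to `H_n` itself. -/
theorem houghton_pointwise_stabilizer_iso (n : ℕ) (hn : 1 ≤ n) (S : Finset (Fin n × ℕ)) :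
    Nonempty (houghtonPointwiseStabilizer n S ≃* HoughtonGroup n) := by
  refine ⟨MulEquiv.ofBijective (stabHom n S) ⟨?_, ?_⟩⟩
  · intro σ τ h
    have h2 : HoughtonAux.conj S σ.1.1 σ.2 = HoughtonAux.conj S τ.1.1 τ.2 :=
      congrArg (fun x => ((x : HoughtonGroup n) : Equiv.Perm (Fin n × ℕ))) h
    apply Subtype.ext; apply Subtype.ext; apply Equiv.ext; intro q
    by_cases hq : q ∈ S
    · rw [σ.2 q hq, τ.2 q hq]
    · have e := congrFun (congrArg (fun (x : Equiv.Perm (Fin n × ℕ)) => (x : Fin n × ℕ → Fin n × ℕ)) h2)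
        (HoughtonAux.fromC S q)
      change HoughtonAux.fromC S (σ.1.1 (HoughtonAux.toC S (HoughtonAux.fromC S q))) =
        HoughtonAux.fromC S (τ.1.1 (HoughtonAux.toC S (HoughtonAux.fromC S q))) at e
      rw [HoughtonAux.toC_fromC S hq] at e
      have e2 := congrArg (HoughtonAux.toC S) e
      rwa [HoughtonAux.toC_fromC S (HoughtonAux.not_mem_of_fix S σ.2 hq),
        HoughtonAux.toC_fromC S (HoughtonAux.not_mem_of_fix S τ.2 hq)] at e2
  · intro τ
    refine ⟨⟨⟨HoughtonAux.extPerm S τ.1, HoughtonAux.extPerm_mem S τ.1 τ.2⟩,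
      fun x hx => HoughtonAux.extPerm_fix S τ.1 x hx⟩, ?_⟩
    apply Subtype.ext; apply Equiv.ext; intro q
    exact HoughtonAux.conj_extPerm S τ.1 q
end
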